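/- Let |ψ⟩ be an n-qubit pure state with |⟨ψ|0⟩^n|² = 1 - ε². Then the multipartite concurrence C(|ψ⟩) = 2√(1 - ⟨ψ|^⊗2 P₁⊗⋯⊗Pₙ |ψ⟩^⊗2), where Pᵢ is the projector onto the symmetric subspace of the two copies of qubit i, satisfies C(|ψ⟩)² ≤ 16·(2n)·ε (i.e., C(|ψ⟩)² = O(nε)), using that C(|0⟩^n) = 0 and ‖P₁⊗⋯⊗Pₙ‖_∞ = 1. -/

import Mathlib

noncomputable section

open scoped BigOperators ComplexOrder
open Matrix

/-- Singular values of a matrix: square roots of eigenvalues of `Aᴴ * A`. -/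
def singVals {m n : Type*} [Fintype m] [Fintype n] [DecidableEq n]
    (A : Matrix m n ℂ) (i : n) : ℝ :=
  Real.sqrt ((Matrix.posSemidef_conjTranspose_mul_self A).1.eigenvalues i)

/-- Trace norm: sum of singular values. -/
def traceNorm {m n : Type*} [Fintype m] [Fintype n] [DecidableEq n]
    (A : Matrix m n ℂ) : ℝ := ∑ i, singVals A i

/-- Operator norm: largest singular value. -/
def opNorm {m n : Type*} [Fintype m] [Fintype n] [DecidableEq n]
    (A : Matrix m n ℂ) : ℝ := ⨆ i, singVals A i

/-- Trace distance between two operators. -/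
def tdist {n : Type*} [Fintype n] [DecidableEq n] (ρ σ : Matrix n n ℂ) : ℝ :=
  traceNorm (ρ - σ) / 2

/-- Rank-one projector `|ψ⟩⟨ψ|` associated to a vector. -/
def projOp {n : Type*} [Fintype n] (ψ : n → ℂ) : Matrix n n ℂ :=
  Matrix.vecMulVec ψ (star ψ)

/-- Von Neumann entropy (base 2) via eigenvalues of a Hermitian matrix. -/
def vnEntropy {n : Type*} [Fintype n] [DecidableEq n] {ρ : Matrix n n ℂ}
    (h : ρ.IsHermitian) : ℝ :=
  -∑ i, h.eigenvalues i * Real.logb 2 (h.eigenvalues i)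

/-- k-fold tensor power of a vector. -/
def tensPow {d : Type*} [Fintype d] (k : ℕ) (ψ : d → ℂ) : (Fin k → d) → ℂ :=
  fun x => ∏ t, ψ (x t)

/-- Projector onto the symmetric subspace of `ℂ² ⊗ ℂ²`. -/
def symProj : Matrix (Fin 2 × Fin 2) (Fin 2 × Fin 2) ℂ :=
  Matrix.of fun p q => (1 / 2 : ℂ) *
    ((if p.1 = q.1 ∧ p.2 = q.2 then 1 else 0) + (if p.1 = q.2 ∧ p.2 = q.1 then 1 else 0))

/-- The operator `P₁ ⊗ ⋯ ⊗ Pₙ` on two copies of `n` qubits, where `Pᵢ` is the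
projector onto the symmetric subspace of the two copies of qubit `i`. -/
def bigSymProj (n : ℕ) :
    Matrix ((Fin n → Fin 2) × (Fin n → Fin 2)) ((Fin n → Fin 2) × (Fin n → Fin 2)) ℂ :=
  Matrix.of fun p q => ∏ i, symProj (p.1 i, p.2 i) (q.1 i, q.2 i)

/-- Two copies `|ψ⟩^⊗2` of an `n`-qubit state. -/
def twoCopies {n : ℕ} (ψ : (Fin n → Fin 2) → ℂ) :
    ((Fin n → Fin 2) × (Fin n → Fin 2)) → ℂ := fun p => ψ p.1 * ψ p.2

/-- Multipartite concurrence `C(ψ) = 2√(1 - ⟨ψ|^⊗2 P₁⊗⋯⊗Pₙ |ψ⟩^⊗2)`. -/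
def concurrence {n : ℕ} (ψ : (Fin n → Fin 2) → ℂ) : ℝ :=
  2 * Real.sqrt (1 - (star (twoCopies ψ) ⬝ᵥ (bigSymProj n).mulVec (twoCopies ψ)).re)

lemma symProj_star (p q : Fin 2 × Fin 2) : star (symProj p q) = symProj q p := by
  simp only [symProj, Matrix.of_apply]
  rcases p with ⟨a,b⟩; rcases q with ⟨c,d⟩
  fin_cases a <;> fin_cases b <;> fin_cases c <;> fin_cases d <;> norm_num

lemma symProj_mul (p q : Fin 2 × Fin 2) :
    ∑ r : Fin 2 × Fin 2, symProj p r * symProj r q = symProj p q := by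
  rcases p with ⟨a,b⟩; rcases q with ⟨c,d⟩
  simp only [symProj, Fintype.sum_prod_type, Fin.sum_univ_succ, Matrix.of_apply]
  fin_cases a <;> fin_cases b <;> fin_cases c <;> fin_cases d <;> norm_num

lemma bigSymProj_herm (n : ℕ) : (bigSymProj n)ᴴ = bigSymProj n := by
  ext p q
  simp only [Matrix.conjTranspose_apply, bigSymProj, Matrix.of_apply, star_prod]
  exact Finset.prod_congr rfl fun i _ => symProj_star _ _

lemma bigSymProj_mul (n : ℕ) : bigSymProj n * bigSymProj n = bigSymProj n := by
  ext p q
  rw [Matrix.mul_apply]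
  have h1 : ∀ r : (Fin n → Fin 2) × (Fin n → Fin 2),
      bigSymProj n p r * bigSymProj n r q
        = ∏ i, (symProj (p.1 i, p.2 i) (r.1 i, r.2 i) * symProj (r.1 i, r.2 i) (q.1 i, q.2 i)) := by
    intro r; simp [bigSymProj, Finset.prod_mul_distrib]
  simp only [h1]
  rw [Fintype.sum_equiv (Equiv.arrowProdEquivProdArrow (Fin n) (fun _ => Fin 2) (fun _ => Fin 2)).symm
      _ (fun f : Fin n → Fin 2 × Fin 2 =>
        ∏ i, (symProj (p.1 i, p.2 i) (f i) * symProj (f i) (q.1 i, q.2 i)))]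
  · rw [← Fintype.prod_sum (κ := fun _ : Fin n => Fin 2 × Fin 2)
        (f := fun i j => symProj (p.1 i, p.2 i) j * symProj j (q.1 i, q.2 i))]
    simp only [symProj_mul]; rfl
  · intro f
    simp [Equiv.arrowProdEquivProdArrow]

noncomputable def zeroKet (n : ℕ) : (Fin n → Fin 2) → ℂ :=
  fun x => if x = (fun _ => 0) then 1 else 0

lemma symProj_zero (a b : Fin 2) :
    symProj (a, b) (0, 0) = if a = 0 ∧ b = 0 then 1 else 0 := by
  fin_cases a <;> fin_cases b <;> norm_num [symProj]

lemma twoCopies_zeroKet {n : ℕ} (p : (Fin n → Fin 2) × (Fin n → Fin 2)) :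
    twoCopies (zeroKet n) p
      = if p = ((fun _ => 0), (fun _ => 0)) then 1 else 0 := by
  rcases p with ⟨x, y⟩
  simp only [twoCopies, zeroKet, Prod.mk.injEq, Prod.ext_iff]
  by_cases hx : x = fun _ => 0 <;> by_cases hy : y = fun _ => 0 <;> simp [hx, hy]

lemma bigSymProj_fix (n : ℕ) :
    (bigSymProj n).mulVec (twoCopies (zeroKet n)) = twoCopies (zeroKet n) := by
  funext p
  rw [Matrix.mulVec]
  show (∑ q, bigSymProj n p q * twoCopies (zeroKet n) q) = _
  rw [Finset.sum_eq_single (((fun _ => 0), (fun _ => 0)) :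
      (Fin n → Fin 2) × (Fin n → Fin 2))]
  · rw [twoCopies_zeroKet, if_pos rfl, mul_one]
    simp only [bigSymProj, Matrix.of_apply, symProj_zero, twoCopies_zeroKet]
    rw [Finset.prod_boole]
    rcases p with ⟨x, y⟩
    simp only [Prod.mk.injEq, funext_iff, ← forall_and, Finset.mem_univ, true_implies]
  · intro q _ hq
    rw [twoCopies_zeroKet, if_neg hq, mul_zero]
  · intro h; exact absurd (Finset.mem_univ _) h

lemma dot_zero_zero (n : ℕ) :
    star (twoCopies (zeroKet n)) ⬝ᵥ twoCopies (zeroKet n) = 1 := by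
  rw [dotProduct]
  rw [Finset.sum_eq_single (((fun _ => 0), (fun _ => 0)) :
      (Fin n → Fin 2) × (Fin n → Fin 2))]
  · simp [twoCopies_zeroKet]
  · intro q _ hq; simp [twoCopies_zeroKet, hq]
  · intro h; exact absurd (Finset.mem_univ _) h

lemma dot_zero_psi {n : ℕ} (ψ : (Fin n → Fin 2) → ℂ) :
    star (twoCopies (zeroKet n)) ⬝ᵥ twoCopies ψ = (ψ (fun _ => 0)) ^ 2 := by
  rw [dotProduct]
  rw [Finset.sum_eq_single (((fun _ => 0), (fun _ => 0)) :
      (Fin n → Fin 2) × (Fin n → Fin 2))]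
  · simp [twoCopies, zeroKet]; ring
  · intro q _ hq; simp [twoCopies_zeroKet, hq]
  · intro h; exact absurd (Finset.mem_univ _) h

lemma key {n : ℕ} (ψ : (Fin n → Fin 2) → ℂ) :
    1 - 2 * (1 - ‖ψ (fun _ => 0)‖ ^ 2)
      ≤ (star (twoCopies ψ) ⬝ᵥ (bigSymProj n).mulVec (twoCopies ψ)).re := by
  set a := ψ (fun _ => 0) with ha
  set u : ℂ := if a = 0 then 1 else a / ‖a‖ with hu
  have hua : star u * a = (‖a‖ : ℂ) := by
    by_cases h : a = 0
    · simp [hu, h]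
    · have hna : (‖a‖ : ℂ) ≠ 0 := by
        simpa using norm_ne_zero_iff.mpr h
      have hne : (‖a‖ : ℂ) ≠ 0 :=
        Complex.ofReal_ne_zero.mpr (norm_ne_zero_iff.mpr h)
      rw [hu, if_neg h]
      rw [RCLike.star_def, map_div₀, Complex.conj_ofReal]
      field_simp
      rw [← Complex.normSq_eq_conj_mul_self, Complex.normSq_eq_norm_sq]
      push_cast
      try ring
  have huu : star u * u = 1 := by
    by_cases h : a = 0
    · simp [hu, h]
    · have hna : (‖a‖ : ℂ) ≠ 0 := by simpa using norm_ne_zero_iff.mpr h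
      have hne : (‖a‖ : ℂ) ≠ 0 :=
        Complex.ofReal_ne_zero.mpr (norm_ne_zero_iff.mpr h)
      rw [hu, if_neg h, RCLike.star_def, map_div₀, Complex.conj_ofReal]
      field_simp
      rw [← Complex.normSq_eq_conj_mul_self, Complex.normSq_eq_norm_sq]
      push_cast
      try rw [sq]
      try exact div_self (mul_ne_zero hne hne)
  set Q := bigSymProj n with hQ
  set Φ := twoCopies (zeroKet n) with hΦ
  set Ψ := twoCopies ψ with hΨ
  set w : ((Fin n → Fin 2) × (Fin n → Fin 2)) → ℂ := (u ^ 2) • Φ with hw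
  set g : ((Fin n → Fin 2) × (Fin n → Fin 2)) → ℂ := Ψ - w with hg
  have hQw : Q.mulVec w = w := by
    rw [hw, Matrix.mulVec_smul, bigSymProj_fix]
  have hherm : ∀ x y, star x ⬝ᵥ Q.mulVec y = star (Q.mulVec x) ⬝ᵥ y := by
    intro x y
    rw [Matrix.star_mulVec, hQ, bigSymProj_herm, ← hQ, Matrix.dotProduct_mulVec]
  have hww : star w ⬝ᵥ w = 1 := by
    rw [hw, star_smul, smul_dotProduct, dotProduct_smul, hΦ, dot_zero_zero]
    simp only [smul_eq_mul, mul_one, star_pow]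
    calc star u ^ 2 * u ^ 2 = (star u * u) ^ 2 := by ring
    _ = 1 := by rw [huu]; norm_num
  have hwΨ : star w ⬝ᵥ Ψ = (‖a‖ : ℂ) ^ 2 := by
    rw [hw, star_smul, smul_dotProduct, hΦ, hΨ, dot_zero_psi]
    simp only [smul_eq_mul, star_pow, ← ha]
    calc star u ^ 2 * a ^ 2 = (star u * a) ^ 2 := by ring
    _ = (‖a‖ : ℂ) ^ 2 := by rw [hua]
  have hwg : star w ⬝ᵥ g = (‖a‖ : ℂ) ^ 2 - 1 := by
    rw [hg, dotProduct_sub, hwΨ, hww]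
  have hgw : star g ⬝ᵥ w = star ((‖a‖ : ℂ) ^ 2 - 1) := by
    rw [← hwg, Matrix.star_dotProduct w g, Matrix.star_dotProduct g w]
    simp
  have hgQg : 0 ≤ (star g ⬝ᵥ Q.mulVec g).re := by
    have : star g ⬝ᵥ Q.mulVec g = star (Q.mulVec g) ⬝ᵥ (Q.mulVec g) := by
      conv_lhs => rw [show Q.mulVec g = (Q * Q).mulVec g by rw [hQ, bigSymProj_mul],
        ← Matrix.mulVec_mulVec, hherm]
    rw [this]
    have h0 := dotProduct_star_self_nonneg (Q.mulVec g)
    exact (Complex.le_def.mp h0).1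
  have expand : star Ψ ⬝ᵥ Q.mulVec Ψ
      = star g ⬝ᵥ Q.mulVec g + star g ⬝ᵥ w + (star w ⬝ᵥ g + 1) := by
    have hΨgw : Ψ = g + w := by rw [hg]; ring
    conv_lhs => rw [hΨgw]
    rw [star_add, Matrix.mulVec_add, add_dotProduct, dotProduct_add,
      dotProduct_add, hQw]
    rw [hherm w, hQw, hww, hgw]
  rw [expand]
  simp only [Complex.add_re, hwg, hgw]
  have hre : ((‖a‖ : ℂ) ^ 2 - 1).re = ‖a‖ ^ 2 - 1 := by
    rw [show ((‖a‖ : ℂ) ^ 2 - 1) = ((‖a‖ ^ 2 - 1 : ℝ) : ℂ) by push_cast; ring,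
      Complex.ofReal_re]
  have hre2 : (star ((‖a‖ : ℂ) ^ 2 - 1)).re = ‖a‖ ^ 2 - 1 := by
    rw [Complex.star_def, Complex.conj_re, hre]
  rw [hre, hre2, Complex.one_re]
  nlinarith [hgQg]

/-- If `|⟨ψ|0ⁿ⟩|² = 1 - ε²` then `C(ψ)² ≤ 16·(2n)·ε`. -/
theorem stmt_17 (n : ℕ) (ψ : (Fin n → Fin 2) → ℂ) (hψ : ∑ x, ‖ψ x‖ ^ 2 = 1)
    (ε : ℝ) (hε : ε ∈ Set.Icc (0 : ℝ) 1)
    (hov : ‖star ψ ⬝ᵥ (fun x : Fin n → Fin 2 => if x = (fun _ => 0) then 1 else 0)‖ ^ 2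
      = 1 - ε ^ 2) :
    concurrence ψ ^ 2 ≤ 16 * (2 * n) * ε := by
  have hdot : star ψ ⬝ᵥ (fun x : Fin n → Fin 2 => if x = (fun _ => 0) then 1 else 0)
      = star (ψ (fun _ => 0)) := by
    rw [dotProduct, Finset.sum_eq_single ((fun _ => 0) : Fin n → Fin 2)]
    · simp
    · intro x _ hx; simp [hx]
    · intro h; exact absurd (Finset.mem_univ _) h
  have hA : ‖ψ (fun _ => 0)‖ ^ 2 = 1 - ε ^ 2 := by
    rw [hdot, norm_star] at hov; exact hov
  have hkey := key ψ
  rw [hA] at hkey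
  set R := (star (twoCopies ψ) ⬝ᵥ (bigSymProj n).mulVec (twoCopies ψ)).re with hR
  have h1 : 1 - R ≤ 2 * ε ^ 2 := by linarith
  have hC : concurrence ψ ^ 2 ≤ 8 * ε ^ 2 := by
    rw [concurrence, mul_pow, ← hR]
    have hs : Real.sqrt (1 - R) ≤ Real.sqrt (2 * ε ^ 2) := Real.sqrt_le_sqrt h1
    have hsq : Real.sqrt (1 - R) ^ 2 ≤ 2 * ε ^ 2 :=
      (pow_le_pow_left₀ (Real.sqrt_nonneg _) hs 2).trans_eq
        (Real.sq_sqrt (by positivity))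
    nlinarith
  rcases Nat.eq_zero_or_pos n with hn | hn
  · subst hn
    have huniq : ∀ x : Fin 0 → Fin 2, x = (fun _ => 0) := by
      intro x; funext i; exact i.elim0
    have h1' : ‖ψ (fun _ => 0)‖ ^ 2 = 1 := by
      rw [← hψ, Finset.sum_eq_single ((fun _ => 0) : Fin 0 → Fin 2)]
      · intro x _ hx; exact absurd (huniq x) hx
      · intro h; exact absurd (Finset.mem_univ _) h
    have hε0 : ε ^ 2 = 0 := by rw [h1'] at hA; linarith
    simp only [Nat.cast_zero]
    nlinarith
  · have hn1 : (1 : ℝ) ≤ (n : ℝ) := by exact_mod_cast hn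
    obtain ⟨hε0, hε1⟩ := hε
    nlinarith
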